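/- Let L(s) = (1/2)(s₁-s₂)². Along any trajectory generated by the feedback u*[s] = (1, ŝ(s₁)) if s₁>s₂, (r, ŝ(s₁)) if s₁=s₂, (0, ŝ(s₂)) if s₁<s₂, one has L̇ + (2d/(r(1-r)))L ≤ 0; in particular the diagonal Δ = {s₁ = s₂} is positively invariant under this feedback. -/

import Mathlib

open scoped Classical

/-- Along the optimal feedback, L = (1/2)(s₁-s₂)² satisfies L̇ + (2d/(r(1-r)))L ≤ 0;
    in particular the diagonal {s₁ = s₂} is positively invariant. -/
theorem stmt13 (γ : ℝ → ℝ) (r d : ℝ)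
    (hr : r ∈ Set.Ioo (0:ℝ) 1) (hd : 0 ≤ d)
    (hγ : ∀ x ≥ (0:ℝ), 0 ≤ γ x)
    (s₁ s₂ L : ℝ → ℝ)
    (hL : ∀ t, L t = (1 / 2) * (s₁ t - s₂ t) ^ 2)
    (hstate : ∀ t ≥ (0:ℝ), 0 ≤ s₁ t ∧ 0 ≤ s₂ t)
    -- closed-loop dynamics under the feedback u*[s]
    (hode1 : ∀ t ≥ (0:ℝ), HasDerivAt s₁
      ((if s₂ t < s₁ t then -(1 / r) * γ (s₁ t)
        else if s₁ t < s₂ t then 0 else -γ (s₁ t)) + d / r * (s₂ t - s₁ t)) t)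
    (hode2 : ∀ t ≥ (0:ℝ), HasDerivAt s₂
      ((if s₂ t < s₁ t then 0
        else if s₁ t < s₂ t then -(1 / (1 - r)) * γ (s₂ t) else -γ (s₂ t)) +
       d / (1 - r) * (s₁ t - s₂ t)) t) :
    (∀ t ≥ (0:ℝ), deriv L t + (2 * d / (r * (1 - r))) * L t ≤ 0) ∧
    (s₁ 0 = s₂ 0 → ∀ t ≥ (0:ℝ), s₁ t = s₂ t) := by
  obtain ⟨hr0, hr1⟩ := hr
  have h1r : (0:ℝ) < 1 - r := by linarith
  set c : ℝ := 2 * d / (r * (1 - r)) with hc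
  have hLfun : L = fun t => (1 / 2) * (s₁ t - s₂ t) ^ 2 := funext hL
  -- derivative data
  have key : ∀ t ≥ (0:ℝ), ∃ D : ℝ, HasDerivAt L D t ∧ D + c * L t ≤ 0 := by
    intro t ht
    have h1 := hode1 t ht
    have h2 := hode2 t ht
    set a : ℝ := (if s₂ t < s₁ t then -(1 / r) * γ (s₁ t)
        else if s₁ t < s₂ t then 0 else -γ (s₁ t)) + d / r * (s₂ t - s₁ t) with ha
    set b : ℝ := (if s₂ t < s₁ t then 0
        else if s₁ t < s₂ t then -(1 / (1 - r)) * γ (s₂ t) else -γ (s₂ t)) +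
       d / (1 - r) * (s₁ t - s₂ t) with hb
    refine ⟨(s₁ t - s₂ t) * (a - b), ?_, ?_⟩
    · have he : HasDerivAt (fun u => (1 / 2) * (s₁ u - s₂ u) ^ 2)
          ((s₁ t - s₂ t) * (a - b)) t := by
        have := ((h1.sub h2).pow 2).const_mul (1/2 : ℝ)
        refine this.congr_deriv ?_
        simp only [Pi.sub_apply]; ring
      rw [hLfun]; exact he
    · rw [hL t]
      have hγ1 : 0 ≤ γ (s₁ t) := hγ _ (hstate t ht).1
      have hγ2 : 0 ≤ γ (s₂ t) := hγ _ (hstate t ht).2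
      rcases lt_trichotomy (s₂ t) (s₁ t) with hlt | heq | hgt
      · have h2' : ¬ s₁ t < s₂ t := by linarith
        rw [ha, hb, if_pos hlt, if_pos hlt]
        have hkey : (s₁ t - s₂ t) *
            ((-(1 / r) * γ (s₁ t) + d / r * (s₂ t - s₁ t)) -
             (0 + d / (1 - r) * (s₁ t - s₂ t))) +
            c * ((1 / 2) * (s₁ t - s₂ t) ^ 2)
            = -(γ (s₁ t) / r) * (s₁ t - s₂ t) := by
          rw [hc]; field_simp; ring
        rw [hkey]
        have : 0 ≤ γ (s₁ t) / r := div_nonneg hγ1 hr0.le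
        nlinarith
      · rw [ha, hb]
        have hne : ¬ s₂ t < s₁ t := by simp [heq]
        have hne' : ¬ s₁ t < s₂ t := by simp [heq]
        rw [if_neg hne, if_neg hne', if_neg hne, if_neg hne']
        rw [heq]
        simp
      · have h1' : ¬ s₂ t < s₁ t := by linarith
        rw [ha, hb, if_neg h1', if_neg h1', if_pos hgt, if_pos hgt]
        have hkey : (s₁ t - s₂ t) *
            ((0 + d / r * (s₂ t - s₁ t)) -
             (-(1 / (1 - r)) * γ (s₂ t) + d / (1 - r) * (s₁ t - s₂ t))) +
            c * ((1 / 2) * (s₁ t - s₂ t) ^ 2)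
            = (γ (s₂ t) / (1 - r)) * (s₁ t - s₂ t) := by
          rw [hc]; field_simp; ring
        rw [hkey]
        have : 0 ≤ γ (s₂ t) / (1 - r) := div_nonneg hγ2 h1r.le
        nlinarith
  have part1 : ∀ t ≥ (0:ℝ), deriv L t + c * L t ≤ 0 := by
    intro t ht
    obtain ⟨D, hD, hle⟩ := key t ht
    rw [hD.deriv]; exact hle
  refine ⟨part1, ?_⟩
  intro h0 t ht
  -- Gronwall via the auxiliary function g = L * exp(c·)
  set g : ℝ → ℝ := fun u => L u * Real.exp (c * u) with hg
  have hder : ∀ u ≥ (0:ℝ), HasDerivAt g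
      (deriv L u * Real.exp (c * u) + L u * (Real.exp (c * u) * c)) u := by
    intro u hu
    obtain ⟨D, hD, _⟩ := key u hu
    have hexp : HasDerivAt (fun v => Real.exp (c * v)) (Real.exp (c * u) * c) u := by
      have h' : HasDerivAt (fun v : ℝ => c * v) c u := by simpa using (hasDerivAt_id u).const_mul c
      simpa [mul_comm] using h'.exp
    have hmul := hD.mul hexp
    rw [hD.deriv]
    exact hmul
  have hcont : ContinuousOn g (Set.Ici (0:ℝ)) := fun u hu =>
    ((hder u hu).continuousAt).continuousWithinAt
  have hanti : AntitoneOn g (Set.Ici (0:ℝ)) := by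
    apply antitoneOn_of_deriv_nonpos (convex_Ici 0) hcont
    · intro u hu
      rw [interior_Ici] at hu
      exact ((hder u (le_of_lt hu)).differentiableAt).differentiableWithinAt
    · intro u hu
      rw [interior_Ici] at hu
      rw [(hder u (le_of_lt hu)).deriv]
      have := part1 u (le_of_lt hu)
      have hexp_pos : (0:ℝ) < Real.exp (c * u) := Real.exp_pos _
      nlinarith
  have hg0 : g 0 = 0 := by
    simp [hg, hL 0, h0]
  have hgt : g t ≤ 0 := by
    have := hanti (Set.self_mem_Ici) ht ht
    rwa [hg0] at this
  have hLt : L t ≤ 0 := by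
    have hexp_pos : (0:ℝ) < Real.exp (c * t) := Real.exp_pos _
    by_contra h
    push_neg at h
    have : 0 < g t := mul_pos h hexp_pos
    linarith
  have : (s₁ t - s₂ t) ^ 2 ≤ 0 := by
    rw [hL t] at hLt; linarith
  have hsq : (s₁ t - s₂ t) ^ 2 = 0 := le_antisymm this (sq_nonneg _)
  have := pow_eq_zero_iff (n := 2) (by norm_num) |>.mp hsq
  linarith [sub_eq_zero.mp this]
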